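/- Let A = (A_1,...,A_d), B = (B_1,...,B_d) be commuting d-tuples of bounded operators and X a bounded operator such that X − A_i X B_i = 0 for each 1 ≤ i ≤ d−1 (each pair (A_i,B_i) is (X,1)-isometric). Then Δ^m_{A,B}(X) = 0 if and only if ((d−2)I + L_{A_d}R_{B_d})^m(X) = 0, where L_{A_d}R_{B_d}(Y) = A_d Y B_d. -/

import Mathlib

theorem stmt13 {E : Type*} [NormedAddCommGroup E] [NormedSpace ℂ E] [CompleteSpace E]
    {d : ℕ} (A B : Fin (d + 1) → (E →L[ℂ] E))
    (hA : ∀ i j, A i * A j = A j * A i) (hB : ∀ i j, B i * B j = B j * B i)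
    (X : E →L[ℂ] E) (m : ℕ)
    (h1 : ∀ i : Fin (d + 1), i ≠ Fin.last d → X - A i * X * B i = 0) :
    ((fun Y => Y - ∑ i, A i * Y * B i)^[m] X = 0 ↔
      (fun Y => ((d : ℂ) - 1) • Y + A (Fin.last d) * Y * B (Fin.last d))^[m] X = 0) := by
  set L := Fin.last d with hLdef
  let P : (E →L[ℂ] E) → Prop := fun Y => ∀ i, i ≠ L → A i * Y * B i = Y
  have hPX : P X := fun i hi => (sub_eq_zero.mp (h1 i hi)).symm
  have swap : ∀ (i j : Fin (d + 1)) (Y : E →L[ℂ] E),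
      A j * (A i * Y * B i) * B j = A i * (A j * Y * B j) * B i := by
    intro i j Y
    calc A j * (A i * Y * B i) * B j
        = (A j * A i) * Y * (B i * B j) := by simp only [mul_assoc]
      _ = (A i * A j) * Y * (B j * B i) := by rw [hA j i, hB i j]
      _ = A i * (A j * Y * B j) * B i := by simp only [mul_assoc]
  have hPG : ∀ Y, P Y → P (((d : ℂ) - 1) • Y + A L * Y * B L) := by
    intro Y hY i hi
    have h2 : A i * (A L * Y * B L) * B i = A L * Y * B L := by
      rw [swap L i Y, hY i hi]
    calc A i * (((d : ℂ) - 1) • Y + A L * Y * B L) * B i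
        = ((d : ℂ) - 1) • (A i * Y * B i) + A i * (A L * Y * B L) * B i := by
          simp only [mul_add, add_mul, mul_smul_comm, smul_mul_assoc]
      _ = _ := by rw [hY i hi, h2]
  have hPsmul : ∀ (c : ℂ) (Y), P Y → P (c • Y) := by
    intro c Y hY i hi
    rw [mul_smul_comm, smul_mul_assoc, hY i hi]
  have key : ∀ Y, P Y →
      Y - ∑ i, A i * Y * B i = -(((d : ℂ) - 1) • Y + A L * Y * B L) := by
    intro Y hY
    have hsum : ∑ i, A i * Y * B i = (d : ℂ) • Y + A L * Y * B L := by
      rw [Fin.sum_univ_castSucc]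
      have h3 : ∀ i : Fin d, A i.castSucc * Y * B i.castSucc = Y := fun i =>
        hY i.castSucc (Fin.castSucc_lt_last i).ne
      rw [Finset.sum_congr rfl fun i _ => h3 i]
      simp [Nat.cast_smul_eq_nsmul]
      rfl
    rw [hsum]
    module
  have main : ∀ n, (fun Y => Y - ∑ i, A i * Y * B i)^[n] X
      = ((-1 : ℂ) ^ n) • (fun Y => ((d : ℂ) - 1) • Y + A L * Y * B L)^[n] X
      ∧ P ((fun Y => ((d : ℂ) - 1) • Y + A L * Y * B L)^[n] X) := by
    intro n
    induction n with
    | zero => simpa using hPX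
    | succ n ih =>
      obtain ⟨heq, hP⟩ := ih
      refine ⟨?_, ?_⟩
      · rw [Function.iterate_succ_apply', Function.iterate_succ_apply', heq]
        set Z := (fun Y => ((d : ℂ) - 1) • Y + A L * Y * B L)^[n] X with hZdef
        have hPZ : P (((-1 : ℂ) ^ n) • Z) := hPsmul _ _ hP
        have hk := key _ hPZ
        show ((-1 : ℂ) ^ n) • Z - ∑ i, A i * (((-1 : ℂ) ^ n) • Z) * B i
            = ((-1 : ℂ) ^ (n + 1)) • (((d : ℂ) - 1) • Z + A L * Z * B L)
        rw [hk, mul_smul_comm, smul_mul_assoc, pow_succ]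
        module
      · rw [Function.iterate_succ_apply']
        exact hPG _ hP
  obtain ⟨heq, -⟩ := main m
  rw [heq, smul_eq_zero]
  simp [pow_ne_zero]
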